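/- Let X ⊆ ℝ² be a fence, let p ∈ X, let q > 0, and let ϑ ∈ S_q(p). Let (r_n) be a strictly decreasing sequence in (q,∞) converging to r. If β_n ∈ 𝔅_{q r_n ϑ} for every n and β ∈ 𝔅_{q r ϑ}, then β ∩ limsup β_n ≠ ∅. -/

import Mathlib

open Set Filter Topology Metric

noncomputable section

/-- An arc in a topological space: a subset homeomorphic to the closed unit
interval `[0,1]`. -/
def IsArc {X : Type*} [TopologicalSpace X] (A : Set X) : Prop :=
  Nonempty (Set.Icc (0 : ℝ) 1 ≃ₜ A)

/-- `x` is an endpoint of the arc `A`: it is the image of `0` or `1` under some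
homeomorphism from `[0,1]` onto `A`. -/
def IsArcEndpoint {X : Type*} [TopologicalSpace X] (A : Set X) (x : X) : Prop :=
  ∃ e : Set.Icc (0 : ℝ) 1 ≃ₜ A,
    (e ⟨0, by norm_num⟩ : X) = x ∨ (e ⟨1, by norm_num⟩ : X) = x

/-- A point `x` on the frontier of an open set `U` is a piercing point of `U` if
for every open `V ∋ x` and every arc `α` in the space containing `x` with `x` not
an endpoint of `α`, the set `α ∩ V` meets both `U` and the complement of the
closure of `U`. -/
def IsPiercingPoint {X : Type*} [TopologicalSpace X] (U : Set X) (x : X) : Prop :=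
  x ∈ frontier U ∧
    ∀ V : Set X, IsOpen V → x ∈ V →
      ∀ α : Set X, IsArc α → x ∈ α → ¬ IsArcEndpoint α x →
        (α ∩ V ∩ U).Nonempty ∧ (α ∩ V ∩ (closure U)ᶜ).Nonempty

/-- An open set is pierced if every point of its frontier is a piercing point. -/
def IsPierced {X : Type*} [TopologicalSpace X] (U : Set X) : Prop :=
  IsOpen U ∧ ∀ x ∈ frontier U, IsPiercingPoint U x

/-- A space has the Jure property if its topology has a basis of pierced open sets. -/
def HasJureProperty (X : Type*) [TopologicalSpace X] : Prop :=
  ∃ B : Set (Set X), TopologicalSpace.IsTopologicalBasis B ∧ ∀ U ∈ B, IsPierced U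

/-- A fence: a compact metric space each of whose connected components is an arc
or a single point. -/
def IsFenceSpace (X : Type*) [MetricSpace X] : Prop :=
  CompactSpace X ∧
    ∀ x : X, IsArc (connectedComponent x) ∨ connectedComponent x = {x}

/-- `X` is a fan with vertex `v`: a continuum which is the union of a collection
of arcs any two of which meet exactly at `v`, and in which the intersection of
any two subcontinua is connected. -/
def IsFanWithVertex (X : Type*) [MetricSpace X] (v : X) : Prop :=
  Nonempty X ∧ CompactSpace X ∧ ConnectedSpace X ∧
    (∃ 𝓛 : Set (Set X), (∀ L ∈ 𝓛, IsArc L) ∧ ⋃₀ 𝓛 = Set.univ ∧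
      ∀ L ∈ 𝓛, ∀ L' ∈ 𝓛, L ≠ L' → L ∩ L' = {v}) ∧
    ∀ H K : Set X, H.Nonempty → IsCompact H → IsPreconnected H →
      K.Nonempty → IsCompact K → IsPreconnected K → IsPreconnected (H ∩ K)

/-- The Euclidean plane. -/
abbrev Plane : Type := EuclideanSpace ℝ (Fin 2)

/-- The closed annulus `A_{rq}(p)` between the circles of radii `r` and `q`
centered at `p`. -/
def closedAnnulus (p : Plane) (r q : ℝ) : Set Plane :=
  {x | min r q ≤ dist x p ∧ dist x p ≤ max r q}

/-- A fence inside the plane: a compact set each of whose connected components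
is an arc or a single point. -/
def IsFenceSet (X : Set Plane) : Prop :=
  IsCompact X ∧ ∀ x ∈ X,
    IsArc (connectedComponentIn X x) ∨ connectedComponentIn X x = {x}

/-- `β` is a bend at `S_r(p)` terminating at `S_q(p)`: an arc `β ⊆ X` contained
in the closed annulus `A_{rq}(p)`, meeting `S_r(p)`, and meeting `S_q(p)`
exactly in its two endpoints. -/
def IsBendTerminating (X : Set Plane) (p : Plane) (r q : ℝ) (β : Set Plane) : Prop :=
  IsArc β ∧ β ⊆ X ∧ β ⊆ closedAnnulus p r q ∧
    (β ∩ Metric.sphere p r).Nonempty ∧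
    β ∩ Metric.sphere p q = {x | IsArcEndpoint β x}

/-- `β` is a bend at `S_r(p)`: a bend terminating at `S_q(p)` for some `q > 0`. -/
def IsBendAt (X : Set Plane) (p : Plane) (r : ℝ) (β : Set Plane) : Prop :=
  ∃ q > 0, IsBendTerminating X p r q β

/-- The bend `β` (terminating at `S_q(p)`) separates `ϑ` from `∞`: there is an
arc `α ⊆ D_q(p)` meeting `S_q(p)` exactly at the endpoints of `β` such that `ϑ`
lies in a bounded connected component of the complement of `α ∪ β`. -/
def SeparatesFromInfinity (p : Plane) (q : ℝ) (β : Set Plane) (ϑ : Plane) : Prop :=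
  ∃ α : Set Plane, IsArc α ∧ α ⊆ Metric.closedBall p q ∧
    α ∩ Metric.sphere p q = {x | IsArcEndpoint β x} ∧
    ϑ ∉ α ∪ β ∧ Bornology.IsBounded (connectedComponentIn ((α ∪ β)ᶜ) ϑ)

/-- `𝔅_{qrϑ}`: the set of all bends at `S_r(p)` terminating at `S_q(p)` that
separate `ϑ` from `∞`. -/
def Bends (X : Set Plane) (p : Plane) (q r : ℝ) (ϑ : Plane) : Set (Set Plane) :=
  {β | IsBendTerminating X p r q β ∧ SeparatesFromInfinity p q β ϑ}

/-- Topological limit superior of a sequence of sets: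
`⋂_N closure (⋃_{n ≥ N} A n)`. -/
def setLimsup {X : Type*} [TopologicalSpace X] (A : ℕ → Set X) : Set X :=
  ⋂ N : ℕ, closure (⋃ n, ⋃ _ : N ≤ n, A n)

/-- The point `p + q • (cos θ, sin θ)` of the circle `S_q(p)`. -/
def circlePoint (p : Plane) (q θ : ℝ) : Plane :=
  p + (q * Real.cos θ) • EuclideanSpace.single (0 : Fin 2) (1 : ℝ)
    + (q * Real.sin θ) • EuclideanSpace.single (1 : Fin 2) (1 : ℝ)

lemma isArc_range {X : Type*} [TopologicalSpace X] {A : Set X}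
    (e : Set.Icc (0:ℝ) 1 ≃ₜ A) : A = Set.range (fun t : Set.Icc (0:ℝ) 1 => (e t : X)) := by
  ext x
  constructor
  · intro hx; exact ⟨e.symm ⟨x, hx⟩, by simp⟩
  · rintro ⟨t, rfl⟩; exact (e t).2

lemma IsArc.isCompact' {A : Set Plane} (h : IsArc A) : IsCompact A := by
  obtain ⟨e⟩ := h
  rw [isArc_range e]
  exact isCompact_range (continuous_subtype_val.comp e.continuous)

lemma IsArc.isPreconnected' {A : Set Plane} (h : IsArc A) : IsPreconnected A := by
  obtain ⟨e⟩ := h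
  haveI : PreconnectedSpace (Set.Icc (0:ℝ) 1) := Subtype.preconnectedSpace isPreconnected_Icc
  rw [isArc_range e]
  exact isPreconnected_range (continuous_subtype_val.comp e.continuous)

lemma IsArcEndpoint.mem {X : Type*} [TopologicalSpace X] {A : Set X} {x : X}
    (h : IsArcEndpoint A x) : x ∈ A := by
  obtain ⟨e, h | h⟩ := h <;> rw [← h] <;> exact Subtype.coe_prop _

lemma IsArc.exists_endpoint {X : Type*} [TopologicalSpace X] {A : Set X}
    (h : IsArc A) : ∃ x, IsArcEndpoint A x := by
  obtain ⟨e⟩ := h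
  exact ⟨_, e, Or.inl rfl⟩

lemma circlePoint_apply (p : Plane) (q θ : ℝ) (i : Fin 2) :
    circlePoint p q θ i = p i + (if i = 0 then q * Real.cos θ else q * Real.sin θ) := by
  fin_cases i <;>
    simp [circlePoint, EuclideanSpace.single_apply, PiLp.add_apply, PiLp.smul_apply]

lemma circlePoint_mem_sphere (p : Plane) {q : ℝ} (hq : 0 ≤ q) (θ : ℝ) :
    circlePoint p q θ ∈ sphere p q := by
  have h := Real.sin_sq_add_cos_sq θ
  simp only [mem_sphere_iff_norm]
  rw [show circlePoint p q θ - p = (q * Real.cos θ) • EuclideanSpace.single (0 : Fin 2) (1 : ℝ)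
    + (q * Real.sin θ) • EuclideanSpace.single (1 : Fin 2) (1 : ℝ) by
      unfold circlePoint; abel]
  have h0 : ((q * Real.cos θ) • EuclideanSpace.single (0 : Fin 2) (1 : ℝ)
      + (q * Real.sin θ) • EuclideanSpace.single (1 : Fin 2) (1 : ℝ)) 0 = q * Real.cos θ := by
    simp [EuclideanSpace.single_apply]
  have h1 : ((q * Real.cos θ) • EuclideanSpace.single (0 : Fin 2) (1 : ℝ)
      + (q * Real.sin θ) • EuclideanSpace.single (1 : Fin 2) (1 : ℝ)) 1 = q * Real.sin θ := by
    simp [EuclideanSpace.single_apply]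
  rw [EuclideanSpace.norm_eq, Fin.sum_univ_two, h0, h1]
  rw [show ‖q * Real.cos θ‖ ^ 2 + ‖q * Real.sin θ‖ ^ 2 = q ^ 2 by
    simp only [Real.norm_eq_abs, sq_abs]; nlinarith]
  exact Real.sqrt_sq hq

lemma circlePoint_surj (p : Plane) {q : ℝ} (hq : 0 < q) {x : Plane}
    (hx : x ∈ sphere p q) : ∃ θ, circlePoint p q θ = x := by
  set z : ℂ := ⟨x 0 - p 0, x 1 - p 1⟩ with hz
  have habs : ‖z‖ = q := by
    rw [Complex.norm_def, Complex.normSq_mk]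
    have : dist x p = q := hx
    rw [EuclideanSpace.dist_eq, Fin.sum_univ_two] at this
    simp only [Real.dist_eq, sq_abs] at this
    rw [← this]; ring_nf
  have hz0 : z ≠ 0 := by
    intro h; rw [h] at habs; simp at habs; linarith
  refine ⟨z.arg, ?_⟩
  have hc : Real.cos z.arg = z.re / q := by rw [Complex.cos_arg hz0, habs]
  have hs : Real.sin z.arg = z.im / q := by rw [Complex.sin_arg, habs]
  ext i
  rw [circlePoint_apply]
  fin_cases i
  · simp only [if_pos]
    rw [hc]; field_simp [hz]; simp [hz]
  · rw [if_neg (by norm_num)]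
    rw [hs]; field_simp [hz]; simp [hz]

lemma circlePoint_periodic (p : Plane) (q : ℝ) :
    Function.Periodic (circlePoint p q) (2 * Real.pi) := by
  intro θ; unfold circlePoint; rw [Real.cos_add_two_pi, Real.sin_add_two_pi]

lemma circlePoint_continuous (p : Plane) (q : ℝ) : Continuous (circlePoint p q) := by
  unfold circlePoint; continuity

lemma exists_shift (t c : ℝ) :
    ∃ k : ℤ, t - (k : ℝ) * (2 * Real.pi) ∈ Ioc (c - 2 * Real.pi) c := by
  have h2pi := Real.two_pi_pos
  refine ⟨⌈(t - c) / (2 * Real.pi)⌉, ?_, ?_⟩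
  · have h1 : (⌈(t - c) / (2 * Real.pi)⌉ : ℝ) < (t - c) / (2 * Real.pi) + 1 :=
      Int.ceil_lt_add_one _
    have h2 : ((⌈(t - c) / (2 * Real.pi)⌉ : ℝ) - 1) * (2 * Real.pi) < t - c := by
      rw [← lt_div_iff₀ h2pi]; linarith
    linarith
  · have h1 : (t - c) / (2 * Real.pi) ≤ (⌈(t - c) / (2 * Real.pi)⌉ : ℝ) := Int.le_ceil _
    have h2 : t - c ≤ (⌈(t - c) / (2 * Real.pi)⌉ : ℝ) * (2 * Real.pi) := by
      rw [← div_le_iff₀ h2pi]; exact h1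
    linarith

lemma mem_connectedComponentIn_of_mem_closure {F : Set Plane} (hF : IsOpen F) {x v : Plane}
    (hv : v ∈ closure (connectedComponentIn F x)) (hvF : v ∈ F) :
    v ∈ connectedComponentIn F x := by
  have hN : IsOpen (connectedComponentIn F v) := hF.connectedComponentIn
  have hvN : v ∈ connectedComponentIn F v := mem_connectedComponentIn hvF
  obtain ⟨u, huN, huC⟩ := mem_closure_iff.mp hv _ hN hvN
  rw [connectedComponentIn_eq huC, ← connectedComponentIn_eq huN]
  exact hvN

/-- Lower limit of bends: if `r n` strictly decreases in `(q,∞)`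
to `R`, `βₙ ∈ 𝔅_{q rₙ ϑ}` for each `n`, and `β ∈ 𝔅_{q R ϑ}`, then `β` meets
`limsup βₙ`. -/
theorem lower_limit_of_bends (X : Set Plane) (hX : IsFenceSet X)
    (p : Plane) (hp : p ∈ X) (q : ℝ) (hq : 0 < q)
    (ϑ : Plane) (hϑ : ϑ ∈ Metric.sphere p q)
    (r : ℕ → ℝ) (hanti : StrictAnti r) (hgt : ∀ n, q < r n)
    (R : ℝ) (hlim : Filter.Tendsto r Filter.atTop (nhds R))
    (β : Set Plane) (hβ : β ∈ Bends X p q R ϑ)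
    (βseq : ℕ → Set Plane) (hβseq : ∀ n, βseq n ∈ Bends X p q (r n) ϑ) :
    (β ∩ setLimsup βseq).Nonempty := by
  classical
  obtain ⟨⟨hβarc, hβX, hβann, hβR, hβq⟩, α, hαarc, hαball, hαsph, hϑnotJ, hCbdd⟩ := hβ
  have hqR : q ≤ R := ge_of_tendsto' hlim (fun n => (hgt n).le)
  have hR0 : 0 < R := lt_of_lt_of_le hq hqR
  have hRr : ∀ n, R < r n := by
    intro n
    have h1 : R ≤ r (n + 1) :=
      le_of_tendsto hlim (Filter.eventually_atTop.2
        ⟨n + 1, fun m hm => hanti.antitone hm⟩)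
    exact lt_of_le_of_lt h1 (hanti (Nat.lt_succ_self n))
  set E : Set Plane := {x | IsArcEndpoint β x} with hEdef
  have hEβ : E ⊆ β := fun x hx => hx.mem
  have hEeq : E = β ∩ Metric.sphere p q := hβq.symm
  have hβcompact := hβarc.isCompact'
  have hβconn := hβarc.isPreconnected'
  have hϑβ : ϑ ∉ β := fun h => hϑnotJ (Or.inr h)
  have hβdist : ∀ x ∈ β, q ≤ dist x p ∧ dist x p ≤ R := by
    intro x hx
    obtain ⟨h1, h2⟩ := hβann hx
    rw [min_eq_right hqR] at h1
    rw [max_eq_left hqR] at h2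
    exact ⟨h1, h2⟩
  have key : ∀ n, ∃ w ∈ β, ∃ z ∈ βseq n, dist z w ≤ r n - R := by
    intro n
    obtain ⟨⟨hnarc, hnX, hnann, hnR, hnq⟩, αn, hαnarc, hαnball, hαnsph, hϑnotJn, hCnbdd⟩ :=
      hβseq n
    by_cases hint : (β ∩ βseq n).Nonempty
    · obtain ⟨w, hwβ, hwn⟩ := hint
      exact ⟨w, hwβ, w, hwn, by rw [dist_self]; linarith [hRr n]⟩
    · have hdisj : ∀ x, x ∈ β → x ∉ βseq n := fun x h1 h2 => hint ⟨x, h1, h2⟩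
      have hqrn : q ≤ r n := (hgt n).le
      have hndist : ∀ x ∈ βseq n, q ≤ dist x p ∧ dist x p ≤ r n := by
        intro x hx
        obtain ⟨h1, h2⟩ := hnann hx
        rw [min_eq_right hqrn] at h1
        rw [max_eq_left hqrn] at h2
        exact ⟨h1, h2⟩
      set En : Set Plane := {x | IsArcEndpoint (βseq n) x} with hEndef
      have hEnn : En ⊆ βseq n := fun x hx => hx.mem
      set J : Set Plane := α ∪ β with hJdef
      set Jn : Set Plane := αn ∪ βseq n with hJndef
      set C : Set Plane := connectedComponentIn Jᶜ ϑ with hCdef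
      set Cn : Set Plane := connectedComponentIn Jnᶜ ϑ with hCndef
      have hβnJ : ∀ x ∈ βseq n, x ∉ J := by
        intro x hxn hxJ
        rcases hxJ with hxα | hxβ
        · have h1 : dist x p ≤ q := Metric.mem_closedBall.mp (hαball hxα)
          have h2 : q ≤ dist x p := (hndist x hxn).1
          have hxs : x ∈ Metric.sphere p q := Metric.mem_sphere.mpr (le_antisymm h1 h2)
          have hxE : x ∈ E := by rw [← hαsph]; exact ⟨hxα, hxs⟩
          exact hdisj x (hEβ hxE) hxn
        · exact hdisj x hxβ hxn
      obtain ⟨x0, hx0n, hx0s⟩ := hnR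
      have hx0dist : dist x0 p = r n := Metric.mem_sphere.mp hx0s
      set ray : Set Plane := (fun t : ℝ => p + (1 + t) • (x0 - p)) '' Ici 0 with hraydef
      have hraydist : ∀ t : ℝ, 0 ≤ t →
          dist (p + (1 + t) • (x0 - p)) p = (1 + t) * r n := by
        intro t ht
        rw [dist_self_add_left, norm_smul, Real.norm_eq_abs, abs_of_nonneg (by linarith),
          ← dist_eq_norm, hx0dist]
      have hJball : ∀ x ∈ J, dist x p ≤ R := by
        intro x hx
        rcases hx with hxα | hxβ
        · exact le_trans (Metric.mem_closedBall.mp (hαball hxα)) hqR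
        · exact (hβdist x hxβ).2
      have hrayJ : ray ⊆ Jᶜ := by
        rintro x ⟨t, ht, rfl⟩ hxJ
        have hle := hJball _ hxJ
        rw [hraydist t ht] at hle
        nlinarith [hRr n, mul_nonneg (mem_Ici.mp ht) (le_trans hq.le hqrn)]
      have hx0ray : x0 ∈ ray := ⟨0, self_mem_Ici, by simp⟩
      have hrayconn : IsPreconnected ray := by
        apply isPreconnected_Ici.image
        fun_prop
      have hβnC : ∀ x ∈ βseq n, x ∉ C := by
        intro x hxn hxC
        have hSconn : IsPreconnected (βseq n ∪ ray) :=
          IsPreconnected.union x0 hx0n hx0ray hnarc.isPreconnected' hrayconn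
        have hSsub : βseq n ∪ ray ⊆ Jᶜ :=
          union_subset (fun y hy => hβnJ y hy) hrayJ
        have hSC : βseq n ∪ ray ⊆ C := by
          rw [hCdef, connectedComponentIn_eq hxC]
          exact hSconn.subset_connectedComponentIn (Or.inl hxn) hSsub
        obtain ⟨K, hK⟩ := (Metric.isBounded_iff_subset_closedBall p).mp hCbdd
        have hrn0 : 0 < r n := lt_trans hq (hgt n)
        have hT : (0:ℝ) ≤ max 0 (K / r n) := le_max_left _ _
        have hmem : p + (1 + max 0 (K / r n)) • (x0 - p) ∈ C :=
          hSC (Or.inr ⟨_, hT, rfl⟩)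
        have hle := Metric.mem_closedBall.mp (hK hmem)
        rw [hraydist _ hT] at hle
        have h2 : K / r n ≤ max 0 (K / r n) := le_max_right _ _
        rw [div_le_iff₀ hrn0] at h2
        nlinarith
      have hβJn : ∀ x ∈ β, x ∉ Jn := by
        intro x hxβ hxJn
        rcases hxJn with hxα | hxn
        · have h1 : dist x p ≤ q := Metric.mem_closedBall.mp (hαnball hxα)
          have h2 : q ≤ dist x p := (hβdist x hxβ).1
          have hxs : x ∈ Metric.sphere p q := Metric.mem_sphere.mpr (le_antisymm h1 h2)
          have hxEn : x ∈ En := by rw [← hαnsph]; exact ⟨hxα, hxs⟩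
          exact hdisj x hxβ (hEnn hxEn)
        · exact hdisj x hxβ hxn
      have hEclosed : IsClosed E := by
        rw [hEeq]; exact hβcompact.isClosed.inter Metric.isClosed_sphere
      obtain ⟨w0, hw0⟩ := hβarc.exists_endpoint
      have hw0E : w0 ∈ E := hw0
      obtain ⟨θ0, hθ0⟩ := circlePoint_surj p hq hϑ
      have hw0sph : w0 ∈ Metric.sphere p q := by
        have := hw0E
        rw [hEeq] at this
        exact this.2
      obtain ⟨θE, hθE⟩ := circlePoint_surj p hq hw0sph
      have hper := circlePoint_periodic p q
      set f : ℝ → Plane := circlePoint p q with hfdef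
      have hfc : Continuous f := circlePoint_continuous p q
      set A1 : Set ℝ := f ⁻¹' E ∩ Icc (θ0 - 2 * Real.pi) θ0 with hA1def
      set A2 : Set ℝ := f ⁻¹' E ∩ Icc θ0 (θ0 + 2 * Real.pi) with hA2def
      have hA1cpt : IsCompact A1 :=
        IsCompact.of_isClosed_subset isCompact_Icc
          ((hEclosed.preimage hfc).inter isClosed_Icc) inter_subset_right
      have hA2cpt : IsCompact A2 :=
        IsCompact.of_isClosed_subset isCompact_Icc
          ((hEclosed.preimage hfc).inter isClosed_Icc) inter_subset_right
      have hA1ne : A1.Nonempty := by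
        obtain ⟨k, hk1, hk2⟩ := exists_shift θE θ0
        refine ⟨θE - (k : ℝ) * (2 * Real.pi), ?_, ⟨hk1.le, hk2⟩⟩
        show f _ ∈ E
        rw [hper.sub_int_mul_eq k, hθE]
        exact hw0E
      have hA2ne : A2.Nonempty := by
        obtain ⟨k, hk1, hk2⟩ := exists_shift θE (θ0 + 2 * Real.pi)
        refine ⟨θE - (k : ℝ) * (2 * Real.pi), ?_, ⟨by linarith, hk2⟩⟩
        show f _ ∈ E
        rw [hper.sub_int_mul_eq k, hθE]
        exact hw0E
      set a : ℝ := sSup A1 with hadef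
      set b : ℝ := sInf A2 with hbdef
      have haA1 : a ∈ A1 := hA1cpt.sSup_mem hA1ne
      have hbA2 : b ∈ A2 := hA2cpt.sInf_mem hA2ne
      have hfaE : f a ∈ E := haA1.1
      have hfbE : f b ∈ E := hbA2.1
      have hϑE : ϑ ∉ E := fun h => hϑβ (hEβ h)
      have haθ0 : a < θ0 := by
        rcases lt_or_eq_of_le haA1.2.2 with h | h
        · exact h
        · exact absurd (by rw [← hθ0, ← h]; exact hfaE) hϑE
      have hbθ0 : θ0 < b := by
        rcases lt_or_eq_of_le hbA2.2.1 with h | h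
        · exact h
        · exact absurd (by rw [← hθ0, h]; exact hfbE) hϑE
      have hΓnoE : ∀ t ∈ Ioo a b, f t ∉ E := by
        intro t ht hfE
        rcases le_or_gt t θ0 with h | h
        · have htA1 : t ∈ A1 := ⟨hfE, ⟨by linarith [haA1.2.1, ht.1], h⟩⟩
          have := le_csSup hA1cpt.bddAbove htA1
          linarith [ht.1]
        · have htA2 : t ∈ A2 := ⟨hfE, ⟨h.le, by linarith [hbA2.2.2, ht.2]⟩⟩
          have := csInf_le hA2cpt.bddBelow htA2
          linarith [ht.2]
      set Γ : Set Plane := f '' Ioo a b with hΓdef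
      have hΓsph : Γ ⊆ Metric.sphere p q \ E := by
        rintro x ⟨t, ht, rfl⟩
        exact ⟨circlePoint_mem_sphere p hq.le t, hΓnoE t ht⟩
      have hsphJ : Metric.sphere p q \ E ⊆ Jᶜ := by
        rintro x ⟨hxs, hxE⟩ hxJ
        rcases hxJ with h | h
        · exact hxE (by rw [← hαsph]; exact ⟨h, hxs⟩)
        · exact hxE (by rw [← hβq]; exact ⟨h, hxs⟩)
      have hϑΓ : ϑ ∈ Γ := ⟨θ0, ⟨haθ0, hbθ0⟩, hθ0⟩
      have hΓconn : IsPreconnected Γ := isPreconnected_Ioo.image f hfc.continuousOn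
      have hΓC : Γ ⊆ C :=
        hΓconn.subset_connectedComponentIn hϑΓ (fun x hx => hsphJ (hΓsph hx))
      have hΓJn : Γ ⊆ Jnᶜ := by
        intro x hx hxJn
        rcases hxJn with h | h
        · have h1 : x ∈ En := by rw [← hαnsph]; exact ⟨h, (hΓsph hx).1⟩
          exact hβnC x (hEnn h1) (hΓC hx)
        · exact hβnC x h (hΓC hx)
      have hΓCn : Γ ⊆ Cn := hΓconn.subset_connectedComponentIn hϑΓ hΓJn
      have hab : a < b := lt_trans haθ0 hbθ0
      have hfacl : f a ∈ closure Γ := by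
        have h1 : a ∈ closure (Ioo a b) := by
          rw [closure_Ioo hab.ne]
          exact ⟨le_refl a, hab.le⟩
        exact image_closure_subset_closure_image hfc ⟨a, h1, rfl⟩
      have hJnclosed : IsClosed Jn :=
        (hαnarc.isCompact'.isClosed).union (hnarc.isCompact'.isClosed)
      have hfaJn : f a ∉ Jn := hβJn _ (hEβ hfaE)
      have hfaCn : f a ∈ Cn :=
        mem_connectedComponentIn_of_mem_closure hJnclosed.isOpen_compl
          (closure_mono hΓCn hfacl) hfaJn
      have hβCn : β ⊆ Cn := by
        rw [hCndef, connectedComponentIn_eq hfaCn]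
        exact hβconn.subset_connectedComponentIn (hEβ hfaE) (fun x hx => hβJn x hx)
      obtain ⟨y, hyβ, hys⟩ := hβR
      have hydist : dist y p = R := Metric.mem_sphere.mp hys
      have hyCn : y ∈ Cn := hβCn hyβ
      obtain ⟨K, hK⟩ := (Metric.isBounded_iff_subset_closedBall p).mp hCnbdd
      have hmK : (0:ℝ) ≤ max K 0 := le_max_right _ _
      set T : ℝ := (max K 0 + 1) / R with hTdef
      have hT0 : 0 ≤ T := div_nonneg (by linarith) hR0.le
      have hTRmul : T * R = max K 0 + 1 := by
        rw [hTdef, div_mul_cancel₀ _ hR0.ne']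
      have hTR : K < (1 + T) * R := by
        nlinarith [le_max_left K 0]
      have hsegdist : ∀ t : ℝ, 0 ≤ t →
          dist (p + (1 + t) • (y - p)) p = (1 + t) * R := by
        intro t ht
        rw [dist_self_add_left, norm_smul, Real.norm_eq_abs, abs_of_nonneg (by linarith),
          ← dist_eq_norm, hydist]
      set seg : Set Plane := (fun t : ℝ => p + (1 + t) • (y - p)) '' Icc 0 T with hsegdef
      have hyseg : y ∈ seg := ⟨0, ⟨le_refl 0, hT0⟩, by simp⟩
      have hsegconn : IsPreconnected seg := by
        apply isPreconnected_Icc.image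
        fun_prop
      by_cases hsegJn : (seg ∩ Jn).Nonempty
      · obtain ⟨z, hzseg, hzJn⟩ := hsegJn
        obtain ⟨t, ht, rfl⟩ := hzseg
        have hzd : dist (p + (1 + t) • (y - p)) p = (1 + t) * R := hsegdist t ht.1
        have hzβn : p + (1 + t) • (y - p) ∈ βseq n := by
          rcases hzJn with h | h
          · have h1 : dist (p + (1 + t) • (y - p)) p ≤ q :=
              Metric.mem_closedBall.mp (hαnball h)
            have hs : p + (1 + t) • (y - p) ∈ Metric.sphere p q := by
              apply Metric.mem_sphere.mpr
              apply le_antisymm h1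
              rw [hzd]
              nlinarith [ht.1]
            exact hEnn (by rw [← hαnsph]; exact ⟨h, hs⟩)
          · exact h
        have hzub : dist (p + (1 + t) • (y - p)) p ≤ r n := (hndist _ hzβn).2
        rw [hzd] at hzub
        have hzy : dist (p + (1 + t) • (y - p)) y = t * R := by
          rw [dist_eq_norm, show p + (1 + t) • (y - p) - y = t • (y - p) by module,
            norm_smul, Real.norm_eq_abs, abs_of_nonneg ht.1, ← dist_eq_norm, hydist]
        refine ⟨y, hyβ, _, hzβn, ?_⟩
        rw [hzy]
        nlinarith
      · have hsegsub : seg ⊆ Jnᶜ := fun x hx hxJn => hsegJn ⟨x, hx, hxJn⟩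
        exfalso
        have hsegCn : seg ⊆ Cn := by
          rw [hCndef, connectedComponentIn_eq hyCn]
          exact hsegconn.subset_connectedComponentIn hyseg hsegsub
        have hfar : p + (1 + T) • (y - p) ∈ Cn := hsegCn ⟨T, ⟨hT0, le_refl T⟩, rfl⟩
        have hle := Metric.mem_closedBall.mp (hK hfar)
        rw [hsegdist T hT0] at hle
        linarith
  choose w hw z hz hdist using key
  obtain ⟨L, hLβ, φ, hφ, hconv⟩ := hβcompact.tendsto_subseq hw
  refine ⟨L, hLβ, ?_⟩
  simp only [setLimsup, mem_iInter]
  intro N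
  have htend : Filter.Tendsto (fun k => z (φ k)) Filter.atTop (nhds L) := by
    rw [tendsto_iff_dist_tendsto_zero]
    apply squeeze_zero (fun k => dist_nonneg)
      (g := fun k => (r (φ k) - R) + dist (w (φ k)) L)
      (fun k => le_trans (dist_triangle (z (φ k)) (w (φ k)) L)
        (add_le_add_left (hdist (φ k)) _))
    have h1 : Filter.Tendsto (fun k => r (φ k) - R) Filter.atTop (nhds 0) := by
      have := (hlim.comp hφ.tendsto_atTop).sub (tendsto_const_nhds (x := R))
      simpa using this
    have h2 : Filter.Tendsto (fun k => dist (w (φ k)) L) Filter.atTop (nhds 0) :=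
      tendsto_iff_dist_tendsto_zero.mp hconv
    simpa using h1.add h2
  exact mem_closure_of_tendsto htend (Filter.eventually_atTop.2
    ⟨N, fun k hk => mem_iUnion.mpr ⟨φ k, mem_iUnion.mpr ⟨le_trans hk hφ.le_apply, hz (φ k)⟩⟩⟩)
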